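/- Stopping-condition justification for the symmetrized PPR system: The matrix Q = I - ((1-α)/(1+α)) W is invertible, and for every right-hand-side vector b and every vector x, ‖D^{-1/2}(x - Q^{-1} b)‖_∞ ≤ ((1+α)/(2α)) · ‖D^{-1/2}(b - Q x)‖_∞. In particular, if the residual r = b - Qx satisfies ‖D^{-1/2} r‖_∞ ≤ 2αε/(1+α) for some ε > 0, then ‖D^{-1/2}(x - Q^{-1} b)‖_∞ ≤ ε. -/

import Mathlib

/-- Stopping-condition justification for the symmetrized PPR system. -/
theorem ppr_stopping_condition_justification
    {V : Type*} [Fintype V] [DecidableEq V] [Nonempty V]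
    (A : Matrix V V ℝ) (hsym : A.IsSymm)
    (h01 : ∀ u v, A u v = 0 ∨ A u v = 1)
    (hdiag : ∀ u, A u u = 0)
    (d : V → ℝ) (hd : ∀ u, d u = ∑ v, A u v)
    (hdpos : ∀ u, 0 < d u)
    (α : ℝ) (hα0 : 0 < α) (hα1 : α < 1)
    (W : Matrix V V ℝ)
    (hW : ∀ v w, W v w = A v w / (Real.sqrt (d v) * Real.sqrt (d w)))
    (Q : Matrix V V ℝ) (hQ : Q = 1 - ((1 - α) / (1 + α)) • W) :
    IsUnit Q ∧
    (∀ b x : V → ℝ,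
      ‖fun v => (x v - Q⁻¹.mulVec b v) / Real.sqrt (d v)‖ ≤
        ((1 + α) / (2 * α)) * ‖fun v => (b v - Q.mulVec x v) / Real.sqrt (d v)‖) ∧
    (∀ b x : V → ℝ, ∀ ε : ℝ, 0 < ε →
      ‖fun v => (b v - Q.mulVec x v) / Real.sqrt (d v)‖ ≤ 2 * α * ε / (1 + α) →
      ‖fun v => (x v - Q⁻¹.mulVec b v) / Real.sqrt (d v)‖ ≤ ε) := by
  have hs : ∀ v, 0 < Real.sqrt (d v) := fun v => Real.sqrt_pos.2 (hdpos v)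
  have hsq : ∀ v, Real.sqrt (d v) * Real.sqrt (d v) = d v :=
    fun v => Real.mul_self_sqrt (hdpos v).le
  have hA0 : ∀ u v, 0 ≤ A u v := fun u v => by rcases h01 u v with h | h <;> simp [h]
  set c : ℝ := (1 - α) / (1 + α) with hc
  have hα1' : (0:ℝ) < 1 + α := by linarith
  have hc0 : 0 ≤ c := div_nonneg (by linarith) hα1'.le
  have hc1 : c < 1 := by rw [hc, div_lt_one hα1']; linarith
  -- W is a contraction in the weighted sup norm
  have key : ∀ y : V → ℝ, ∀ v,
      |(W.mulVec y) v / Real.sqrt (d v)| ≤ ‖fun w => y w / Real.sqrt (d w)‖ := by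
    intro y v
    have h1 : (W.mulVec y) v / Real.sqrt (d v)
        = ∑ w, (A v w / d v) * (y w / Real.sqrt (d w)) := by
      rw [Matrix.mulVec, dotProduct, Finset.sum_div]
      refine Finset.sum_congr rfl fun w _ => ?_
      rw [hW, ← hsq v]
      field_simp
      rw [Real.sqrt_sq (hs v).le]
    rw [h1]
    calc |∑ w, (A v w / d v) * (y w / Real.sqrt (d w))|
        ≤ ∑ w, |(A v w / d v) * (y w / Real.sqrt (d w))| :=
          Finset.abs_sum_le_sum_abs _ _
      _ ≤ ∑ w, (A v w / d v) * ‖fun w => y w / Real.sqrt (d w)‖ := by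
          refine Finset.sum_le_sum fun w _ => ?_
          rw [abs_mul, abs_of_nonneg (div_nonneg (hA0 v w) (hdpos v).le)]
          refine mul_le_mul_of_nonneg_left ?_ (div_nonneg (hA0 v w) (hdpos v).le)
          simpa [Real.norm_eq_abs, abs_div] using norm_le_pi_norm (fun w => y w / Real.sqrt (d w)) w
      _ = ‖fun w => y w / Real.sqrt (d w)‖ := by
          rw [← Finset.sum_mul, ← Finset.sum_div, ← hd v,
            div_self (hdpos v).ne', one_mul]
  -- contraction estimate for Q
  have hQv : ∀ y : V → ℝ, Q.mulVec y = y - c • W.mulVec y := by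
    intro y
    rw [hQ, Matrix.sub_mulVec, Matrix.one_mulVec, Matrix.smul_mulVec]
  have hcontr : ∀ y : V → ℝ,
      ‖fun v => y v / Real.sqrt (d v)‖ ≤
        ((1 + α) / (2 * α)) * ‖fun v => (Q.mulVec y) v / Real.sqrt (d v)‖ := by
    intro y
    set N := ‖fun v => y v / Real.sqrt (d v)‖ with hN
    set M := ‖fun v => (Q.mulVec y) v / Real.sqrt (d v)‖ with hM
    have hN0 : 0 ≤ N := norm_nonneg _
    have hM0 : 0 ≤ M := norm_nonneg _
    have step : N ≤ M + c * N := by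
      rw [hN]
      refine (pi_norm_le_iff_of_nonneg (by positivity)).2 fun v => ?_
      have hv : y v / Real.sqrt (d v)
          = (Q.mulVec y) v / Real.sqrt (d v) + c * ((W.mulVec y) v / Real.sqrt (d v)) := by
        rw [hQv y]
        simp only [Pi.sub_apply, Pi.smul_apply, smul_eq_mul]
        ring
      rw [Real.norm_eq_abs, hv]
      calc |(Q.mulVec y) v / Real.sqrt (d v) + c * ((W.mulVec y) v / Real.sqrt (d v))|
          ≤ |(Q.mulVec y) v / Real.sqrt (d v)| + c * |(W.mulVec y) v / Real.sqrt (d v)| := by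
            refine (abs_add_le _ _).trans ?_
            rw [abs_mul, abs_of_nonneg hc0]
        _ ≤ M + c * N := by
            refine add_le_add ?_ (mul_le_mul_of_nonneg_left (key y v) hc0)
            simpa [Real.norm_eq_abs, abs_div] using
              norm_le_pi_norm (fun v => (Q.mulVec y) v / Real.sqrt (d v)) v
    have h2α : (0:ℝ) < 2 * α := by linarith
    have h1c : (1 : ℝ) - c = 2 * α / (1 + α) := by
      rw [hc]; field_simp; ring
    have : (1 - c) * N ≤ M := by nlinarith
    rw [h1c] at this
    have h' : 2 * α * N ≤ (1 + α) * M := by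
      calc 2 * α * N = (1 + α) * (2 * α / (1 + α) * N) := by field_simp
        _ ≤ (1 + α) * M := mul_le_mul_of_nonneg_left this hα1'.le
    rw [div_mul_eq_mul_div, le_div_iff₀ h2α]
    nlinarith [h']
  -- invertibility
  have hdet : IsUnit Q.det := by
    rw [isUnit_iff_ne_zero]
    intro h0
    obtain ⟨y, hy0, hQy⟩ := (Matrix.exists_mulVec_eq_zero_iff).2 h0
    have := hcontr y
    rw [hQy] at this
    simp only [Pi.zero_apply, zero_div] at this
    have hzero : ‖fun _ : V => (0:ℝ)‖ = 0 := by
      simpa using (norm_zero : ‖(0 : V → ℝ)‖ = 0)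
    rw [hzero, mul_zero] at this
    have hNz : ‖fun v => y v / Real.sqrt (d v)‖ = 0 := le_antisymm this (norm_nonneg _)
    apply hy0
    funext v
    have hv : |y v / Real.sqrt (d v)| ≤ 0 := by
      calc |y v / Real.sqrt (d v)| ≤ ‖fun v => y v / Real.sqrt (d v)‖ := by
            simpa [Real.norm_eq_abs, abs_div] using norm_le_pi_norm (fun v => y v / Real.sqrt (d v)) v
        _ = 0 := hNz
    have : y v / Real.sqrt (d v) = 0 := abs_eq_zero.1 (le_antisymm hv (abs_nonneg _))
    have := (div_eq_zero_iff.1 this).resolve_right (hs v).ne'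
    simpa using this
  refine ⟨(Matrix.isUnit_iff_isUnit_det Q).2 hdet, ?_, ?_⟩
  · intro b x
    have heq : Q.mulVec (x - Q⁻¹.mulVec b) = Q.mulVec x - b := by
      rw [Matrix.mulVec_sub, Matrix.mulVec_mulVec, Matrix.mul_nonsing_inv _ hdet,
        Matrix.one_mulVec]
    have h := hcontr (x - Q⁻¹.mulVec b)
    rw [heq] at h
    have hnormeq : ‖fun v => (Q.mulVec x - b) v / Real.sqrt (d v)‖
        = ‖fun v => (b v - Q.mulVec x v) / Real.sqrt (d v)‖ := by
      rw [← norm_neg]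
      congr 1
      funext v
      simp [Pi.sub_apply, neg_div]
      ring
    rw [hnormeq] at h
    simpa [Pi.sub_apply] using h
  · intro b x ε hε hres
    have h := hcontr (x - Q⁻¹.mulVec b)
    have heq : Q.mulVec (x - Q⁻¹.mulVec b) = Q.mulVec x - b := by
      rw [Matrix.mulVec_sub, Matrix.mulVec_mulVec, Matrix.mul_nonsing_inv _ hdet,
        Matrix.one_mulVec]
    rw [heq] at h
    have hnormeq : ‖fun v => (Q.mulVec x - b) v / Real.sqrt (d v)‖
        = ‖fun v => (b v - Q.mulVec x v) / Real.sqrt (d v)‖ := by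
      rw [← norm_neg]
      congr 1
      funext v
      simp [Pi.sub_apply, neg_div]
      ring
    rw [hnormeq] at h
    have hpos : (0:ℝ) < (1 + α) / (2 * α) := by positivity
    calc ‖fun v => (x v - Q⁻¹.mulVec b v) / Real.sqrt (d v)‖
        ≤ ((1 + α) / (2 * α)) * ‖fun v => (b v - Q.mulVec x v) / Real.sqrt (d v)‖ := by
          simpa [Pi.sub_apply] using h
      _ ≤ ((1 + α) / (2 * α)) * (2 * α * ε / (1 + α)) :=
          mul_le_mul_of_nonneg_left hres hpos.le
      _ = ε := by field_simp
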